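/- Let (G,κ) be a capacitated graph with κ(x) ≤ d_G(x) for all x, let X = {x : κ(x) = d_G(x)}. If a vertex u satisfies |N_G(u) ∩ X| < κ(u) and w ∈ N_G(u) \ X, then there exists a DP-Nash subgraph (D, P; E) of (G,κ) with u ∈ D and {w} ∪ (N_G(u) ∩ X) ⊆ P. -/

import Mathlib

open Finset
open scoped Classical

noncomputable section

variable {V : Type*} [Fintype V]

/-- Degree of a vertex in a (simple) graph on a finite vertex set. -/
def deg (H : SimpleGraph V) (x : V) : ℕ :=
  (Finset.univ.filter fun y => H.Adj x y).card

/-- `(D, P; H)` is a DP-Nash subgraph of the capacitated graph `(G, κ)`: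
`H` is a spanning subgraph of `G`, bipartite with partite sets `D` and `P`,
no vertex of `P` is isolated in `H`, and every `x ∈ D` has
`H`-degree `min (d_G x) (κ x)`. -/
def IsDPNash (G : SimpleGraph V) (κ : V → ℕ) (D P : Finset V) (H : SimpleGraph V) : Prop :=
  H ≤ G ∧ D ∪ P = Finset.univ ∧ Disjoint D P ∧
    (∀ ⦃u v⦄, H.Adj u v → (u ∈ D ∧ v ∈ P) ∨ (u ∈ P ∧ v ∈ D)) ∧
    (∀ v ∈ P, 0 < deg H v) ∧
    (∀ x ∈ D, deg H x = min (deg G x) (κ x))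

/-- `X = {x : κ(x) = d_G(x)}`. -/
def XX (G : SimpleGraph V) (κ : V → ℕ) : Finset V :=
  Finset.univ.filter fun x => κ x = deg G x

/-- `Y = N(X) \ X`. -/
def YY (G : SimpleGraph V) (κ : V → ℕ) : Finset V :=
  Finset.univ.filter fun y => y ∉ XX G κ ∧ ∃ x ∈ XX G κ, G.Adj x y

/-- `Z = V \ (X ∪ Y)`. -/
def ZZ (G : SimpleGraph V) (κ : V → ℕ) : Finset V :=
  Finset.univ \ (XX G κ ∪ YY G κ)

/-- `Y^{κ>0} = {y ∈ Y : κ(y) > 0}`. -/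
def Ypos (G : SimpleGraph V) (κ : V → ℕ) : Finset V :=
  (YY G κ).filter fun y => 0 < κ y

/-- The neighbours of `x` in `G` lying in `W`. -/
def nbrW (G : SimpleGraph V) (x : V) (W : Finset V) : Finset V :=
  Finset.univ.filter fun y => G.Adj x y ∧ y ∈ W

/-- `L(W) = {x ∈ X ∪ Z : |N_G(x) ∩ W| > d_G(x) - κ(x)}`. -/
def LL (G : SimpleGraph V) (κ : V → ℕ) (W : Finset V) : Finset V :=
  (XX G κ ∪ ZZ G κ).filter fun x => deg G x - κ x < (nbrW G x W).card

/-- measure: number of ordered adjacent pairs -/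
def mG (G : SimpleGraph V) : ℕ :=
  (Finset.univ.filter fun p : V × V => G.Adj p.1 p.2).card

lemma deg_delete_ne (G : SimpleGraph V) {a b : V} (x : V) (hxa : x ≠ a) (hxb : x ≠ b) :
    deg (G.deleteEdges {s(a, b)}) x = deg G x := by
  unfold deg
  congr 1
  ext y
  simp only [Finset.mem_filter, Finset.mem_univ, true_and]
  simp only [SimpleGraph.deleteEdges_adj, Set.mem_singleton_iff, Sym2.eq_iff]
  constructor
  · exact fun h => h.1
  · intro h
    refine ⟨h, ?_⟩
    rintro (⟨h1, h2⟩ | ⟨h1, h2⟩) <;> exact absurd h1 (by assumption)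

lemma deg_delete_left (G : SimpleGraph V) {a b : V} (hab : G.Adj a b) :
    deg (G.deleteEdges {s(a, b)}) a = deg G a - 1 := by
  have hne : a ≠ b := hab.ne
  have hfe : (Finset.univ.filter fun y => (G.deleteEdges {s(a, b)}).Adj a y)
      = (Finset.univ.filter fun y => G.Adj a y).erase b := by
    ext y
    simp only [Finset.mem_filter, Finset.mem_erase, Finset.mem_univ, true_and,
      SimpleGraph.deleteEdges_adj, Set.mem_singleton_iff, Sym2.eq_iff]
    constructor
    · rintro ⟨h1, h2⟩
      constructor
      · intro hyb
        exact h2 (Or.inl hyb)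
      · exact h1
    · rintro ⟨h1, h2⟩
      refine ⟨h2, ?_⟩
      rintro (h3 | ⟨h3, h4⟩)
      · exact h1 h3
      · exact hne h3
  unfold deg
  convert (congrArg Finset.card hfe).trans (Finset.card_erase_of_mem (by simpa using hab)) using 2
  congr

lemma deg_delete_right (G : SimpleGraph V) {a b : V} (hab : G.Adj a b) :
    deg (G.deleteEdges {s(a, b)}) b = deg G b - 1 := by
  have h : s(a, b) = s(b, a) := Sym2.eq_swap
  rw [h]
  exact deg_delete_left G hab.symm

lemma mG_delete_lt (G : SimpleGraph V) {a b : V} (hab : G.Adj a b) :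
    mG (G.deleteEdges {s(a, b)}) < mG G := by
  apply Finset.card_lt_card
  constructor
  · intro p hp
    simp only [Finset.mem_filter, Finset.mem_univ, true_and,
      SimpleGraph.deleteEdges_adj] at hp ⊢
    exact hp.1
  · intro hsub
    have : (a, b) ∈ Finset.univ.filter fun p : V × V =>
        (G.deleteEdges {s(a, b)}).Adj p.1 p.2 := by convert @hsub (a, b) (by simpa using hab)
    simp only [Finset.mem_filter, SimpleGraph.deleteEdges_adj,
      Set.mem_singleton_iff] at this
    simp at this


lemma deg_eq_card {H : SimpleGraph V} {x : V} {s : Finset V}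
    (h : ∀ y, H.Adj x y ↔ y ∈ s) : deg H x = s.card := by
  unfold deg
  congr 1
  ext y
  simp [h y]

lemma deg_pos {H : SimpleGraph V} {x y : V} (h : H.Adj x y) : 0 < deg H x := by
  unfold deg
  refine Finset.card_pos.2 ⟨y, ?_⟩
  simp [h]

lemma nash_mono {G' G : SimpleGraph V} {κ : V → ℕ} {D P : Finset V} {H : SimpleGraph V}
    (hle : G' ≤ G) (hκ' : ∀ v, κ v ≤ deg G' v) (hκ : ∀ v, κ v ≤ deg G v)
    (h : IsDPNash G' κ D P H) : IsDPNash G κ D P H := by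
  obtain ⟨h1, h2, h3, h4, h5, h6⟩ := h
  exact ⟨h1.trans hle, h2, h3, h4, h5, fun x hx => by
    rw [h6 x hx, min_eq_right (hκ' x), min_eq_right (hκ x)]⟩

/-- Base case: every edge of `G` meets `X`. -/
lemma base_case (G : SimpleGraph V) (κ : V → ℕ) (hκ : ∀ v, κ v ≤ deg G v)
    (hbase : ∀ x y, G.Adj x y → κ x = deg G x ∨ κ y = deg G y)
    (u : V) (huX : κ u = deg G u) :
    ∃ D P H, IsDPNash G κ D P H ∧ u ∈ D ∧ ∀ y, G.Adj u y → y ∈ P := by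
  classical
  set N : V → Finset V := fun v => Finset.univ.filter fun y => G.Adj v y with hN
  have hNcard : ∀ v, (N v).card = deg G v := fun v => rfl
  have hNmem : ∀ v y, y ∈ N v ↔ G.Adj v y := by
    intro v y; simp [hN]
  set ind : Finset V → Prop := fun A => (∀ a ∈ A, κ a = deg G a) ∧ u ∈ A ∧
      ∀ a ∈ A, ∀ b ∈ A, ¬ G.Adj a b with hind
  have hu_cand : ({u} : Finset V) ∈ Finset.univ.powerset.filter ind := by
    rw [Finset.mem_filter]
    refine ⟨Finset.mem_powerset.2 (Finset.subset_univ _), ?_, Finset.mem_singleton_self u, ?_⟩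
    · intro a ha; rw [Finset.mem_singleton] at ha; subst ha; exact huX
    · intro a ha b hb
      rw [Finset.mem_singleton] at ha hb; rw [ha, hb]
      exact G.loopless.irrefl u
  obtain ⟨A, hA_mem, hAmax⟩ :=
    Finset.exists_max_image (Finset.univ.powerset.filter ind) Finset.card ⟨_, hu_cand⟩
  rw [Finset.mem_filter] at hA_mem
  obtain ⟨-, hAX, huA, hAind⟩ := hA_mem
  have hXP0 : ∀ x, κ x = deg G x → x ∉ A → (∃ a ∈ A, G.Adj a x) := by
    intro x hx hxA
    by_contra hno
    push_neg at hno
    have hins : (insert x A) ∈ Finset.univ.powerset.filter ind := by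
      rw [Finset.mem_filter]
      refine ⟨Finset.mem_powerset.2 (Finset.subset_univ _), ?_, Finset.mem_insert_of_mem huA, ?_⟩
      · intro a ha
        rcases Finset.mem_insert.1 ha with ha' | ha'
        · rw [ha']; exact hx
        · exact hAX a ha'
      · intro a ha b hb
        rcases Finset.mem_insert.1 ha with ha' | ha' <;>
          rcases Finset.mem_insert.1 hb with hb' | hb'
        · rw [ha', hb']; exact G.loopless.irrefl x
        · rw [ha']; exact fun h => hno b hb' h.symm
        · rw [hb']; exact hno a ha'
        · exact hAind a ha' b hb'
    have := hAmax _ hins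
    rw [Finset.card_insert_of_notMem hxA] at this
    omega
  set P : Finset V := Finset.univ.filter (fun p => ∃ a ∈ A, G.Adj a p) with hP
  set D : Finset V := Finset.univ \ P with hD
  have hPmem : ∀ p, p ∈ P ↔ ∃ a ∈ A, G.Adj a p := by intro p; simp [hP]
  have hDmem : ∀ v, v ∈ D ↔ v ∉ P := by intro v; simp [hD]
  have hAP : ∀ a ∈ A, a ∉ P := by
    intro a ha hp
    obtain ⟨a', ha', hadj⟩ := (hPmem a).1 hp
    exact hAind a' ha' a ha hadj
  have hAD : ∀ a ∈ A, a ∈ D := fun a ha => (hDmem a).2 (hAP a ha)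
  have hXP : ∀ x, κ x = deg G x → x ∉ A → x ∈ P := by
    intro x hx hxA
    exact (hPmem x).2 (hXP0 x hx hxA)
  have hDnb : ∀ v ∈ D, v ∉ A → ∀ y, G.Adj v y → y ∈ P := by
    intro v hvD hvA y hadj
    have hvP : v ∉ P := (hDmem v).1 hvD
    have hvX : ¬ (κ v = deg G v) := fun h => hvP (hXP v h hvA)
    have hyX : κ y = deg G y := by
      rcases hbase v y hadj with h | h
      · exact absurd h hvX
      · exact h
    by_cases hyA : y ∈ A
    · exact absurd ((hPmem v).2 ⟨y, hyA, hadj.symm⟩) hvP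
    · exact hXP y hyX hyA
  have hSex : ∀ v : V, ∃ t ⊆ N v, t.card = κ v := by
    intro v
    exact Finset.exists_subset_card_eq (by rw [hNcard]; exact hκ v)
  choose S0 hS0sub hS0card using hSex
  set S : V → Finset V := fun v => if v ∈ A then N v else S0 v with hS
  have hSsub : ∀ v, S v ⊆ N v := by
    intro v
    by_cases h : v ∈ A
    · simp only [hS, if_pos h]
      exact Finset.Subset.refl _
    · simp only [hS, if_neg h]; exact hS0sub v
  have hSA : ∀ v ∈ A, S v = N v := by intro v hv; simp [hS, hv]
  have hScard : ∀ v, v ∉ A → (S v).card = κ v := by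
    intro v hv; simp only [hS, if_neg hv]; exact hS0card v
  set H : SimpleGraph V :=
    { Adj := fun x y => (x ∈ D ∧ y ∈ S x) ∨ (y ∈ D ∧ x ∈ S y)
      symm := ⟨fun x y h => Or.symm h⟩
      loopless := ⟨fun x h => by
        rcases h with ⟨-, h⟩ | ⟨-, h⟩ <;> exact G.loopless.irrefl x ((hNmem x x).1 (hSsub x h))⟩ } with hH
  have hHadj : ∀ x y, H.Adj x y ↔ ((x ∈ D ∧ y ∈ S x) ∨ (y ∈ D ∧ x ∈ S y)) := fun x y => Iff.rfl
  have hSP : ∀ v ∈ D, S v ⊆ P := by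
    intro v hv y hy
    by_cases hvA : v ∈ A
    · rw [hSA v hvA] at hy
      exact (hPmem y).2 ⟨v, hvA, (hNmem v y).1 hy⟩
    · exact hDnb v hv hvA y ((hNmem v y).1 (hSsub v hy))
  have hadjD : ∀ x ∈ D, ∀ y, H.Adj x y ↔ y ∈ S x := by
    intro x hx y
    rw [hHadj]
    constructor
    · rintro (⟨-, h⟩ | ⟨hyD, hxS⟩)
      · exact h
      · exact absurd (hSP y hyD hxS) ((hDmem x).1 hx)
    · exact fun h => Or.inl ⟨hx, h⟩
  refine ⟨D, P, H, ⟨?_, ?_, ?_, ?_, ?_, ?_⟩, hAD u huA, ?_⟩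
  · intro x y h
    rcases (hHadj x y).1 h with ⟨-, h⟩ | ⟨-, h⟩
    · exact (hNmem x y).1 (hSsub x h)
    · exact ((hNmem y x).1 (hSsub y h)).symm
  · rw [hD, Finset.sdiff_union_self_eq_union]
    exact Finset.union_eq_left.2 (Finset.subset_univ P)
  · rw [hD]; exact Finset.sdiff_disjoint
  · intro x y h
    rcases (hHadj x y).1 h with ⟨hx, hy⟩ | ⟨hy, hx⟩
    · exact Or.inl ⟨hx, hSP x hx hy⟩
    · exact Or.inr ⟨hSP y hy hx, hy⟩
  · intro p hp
    obtain ⟨a, haA, hadj⟩ := (hPmem p).1 hp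
    have : H.Adj p a := by
      rw [hHadj]
      refine Or.inr ⟨hAD a haA, ?_⟩
      rw [hSA a haA]
      exact (hNmem a p).2 hadj
    exact deg_pos this
  · intro x hx
    have hdx : deg H x = (S x).card := deg_eq_card (hadjD x hx)
    rw [hdx, min_eq_right (hκ x)]
    by_cases hxA : x ∈ A
    · rw [hSA x hxA, hNcard, ← hAX x hxA]
    · exact hScard x hxA
  · intro y hy
    exact (hPmem y).2 ⟨u, huA, hy⟩

lemma no_edges_of_mG_zero {G : SimpleGraph V} (hm : mG G = 0) : ∀ x y, ¬ G.Adj x y := by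
  intro x y hxy
  have hmem : (x, y) ∈ Finset.univ.filter (fun p : V × V => G.Adj p.1 p.2) := by
    simp [hxy]
  have := Finset.card_pos.2 ⟨_, hmem⟩
  unfold mG at hm
  omega

lemma lemma1 : ∀ n : ℕ, ∀ (G : SimpleGraph V) (κ : V → ℕ), mG G ≤ n →
    (∀ v, κ v ≤ deg G v) → ∀ u, κ u = deg G u →
    ∃ D P H, IsDPNash G κ D P H ∧ u ∈ D ∧ ∀ y, G.Adj u y → y ∈ P := by
  intro n
  induction n with
  | zero =>
    intro G κ hm hκ u hu
    have hne := no_edges_of_mG_zero (Nat.le_zero.1 hm)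
    exact base_case G κ hκ (fun x y h => absurd h (hne x y)) u hu
  | succ n ih =>
    intro G κ hm hκ u hu
    by_cases hE : ∃ a b, G.Adj a b ∧ κ a < deg G a ∧ κ b < deg G b
    · obtain ⟨a, b, hab, ha, hb⟩ := hE
      set G' := G.deleteEdges {s(a, b)} with hG'
      have hua : u ≠ a := fun h => by rw [h] at hu; omega
      have hub : u ≠ b := fun h => by rw [h] at hu; omega
      have hκ' : ∀ v, κ v ≤ deg G' v := by
        intro v
        by_cases hva : v = a
        · subst hva; rw [hG', deg_delete_left G hab]; omega
        · by_cases hvb : v = b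
          · subst hvb; rw [hG', deg_delete_right G hab]; omega
          · rw [hG', deg_delete_ne G v hva hvb]; exact hκ v
      have hm' : mG G' ≤ n := by
        have := mG_delete_lt G hab
        rw [← hG'] at this
        omega
      have hu' : κ u = deg G' u := by
        rw [hG', deg_delete_ne G u hua hub]; exact hu
      obtain ⟨D, P, H, hnash, huD, hNP⟩ := ih G' κ hm' hκ' u hu'
      refine ⟨D, P, H, nash_mono (by rw [hG']; exact SimpleGraph.deleteEdges_le _) hκ' hκ hnash,
        huD, ?_⟩
      intro y hy
      apply hNP
      rw [hG', SimpleGraph.deleteEdges_adj]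
      refine ⟨hy, ?_⟩
      rw [Set.mem_singleton_iff, Sym2.eq_iff]
      rintro (⟨h1, -⟩ | ⟨h1, -⟩)
      · exact hua h1
      · exact hub h1
    · push_neg at hE
      have hbase : ∀ x y, G.Adj x y → κ x = deg G x ∨ κ y = deg G y := by
        intro x y hxy
        rcases lt_or_eq_of_le (hκ x) with hx | hx
        · rcases lt_or_eq_of_le (hκ y) with hy | hy
          · exact absurd hy (not_lt.2 (hE x y hxy hx))
          · exact Or.inr hy
        · exact Or.inl hx
      exact base_case G κ hκ hbase u hu

lemma lemma2 : ∀ n : ℕ, ∀ (G : SimpleGraph V) (κ : V → ℕ), mG G ≤ n →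
    (∀ v, κ v ≤ deg G v) → ∀ u w, (nbrW G u (XX G κ)).card < κ u → G.Adj u w →
    ∃ D P H, IsDPNash G κ D P H ∧ u ∈ D ∧ w ∈ P ∧ nbrW G u (XX G κ) ⊆ P := by
  intro n
  induction n with
  | zero =>
    intro G κ hm hκ u w hcard hw
    exact absurd hw (no_edges_of_mG_zero (Nat.le_zero.1 hm) u w)
  | succ n ih =>
    intro G κ hm hκ u w hcard hw
    by_cases huX : κ u = deg G u
    · obtain ⟨D, P, H, hnash, huD, hNP⟩ := lemma1 (n + 1) G κ hm hκ u huX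
      refine ⟨D, P, H, hnash, huD, hNP w hw, ?_⟩
      intro t ht
      rw [nbrW, Finset.mem_filter] at ht
      exact hNP t ht.2.1
    · have hult : κ u < deg G u := lt_of_le_of_ne (hκ u) huX
      -- find z ∈ N(u) \ X with z ≠ w
      have hsplit := Finset.card_filter_add_card_filter_not
        (s := Finset.univ.filter fun y => G.Adj u y) (p := fun y => y ∈ XX G κ)
      have heq1 : ((Finset.univ.filter fun y => G.Adj u y).filter fun y => y ∈ XX G κ)
          = nbrW G u (XX G κ) := by
        rw [Finset.filter_filter, nbrW]
      have hdeg : (Finset.univ.filter fun y => G.Adj u y).card = deg G u := rfl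
      rw [heq1, hdeg] at hsplit
      have h2 : 1 < ((Finset.univ.filter fun y => G.Adj u y).filter
          fun y => ¬ y ∈ XX G κ).card := by omega
      obtain ⟨z, hz_mem, hzw⟩ := Finset.exists_mem_ne h2 w
      rw [Finset.mem_filter, Finset.mem_filter] at hz_mem
      obtain ⟨⟨-, hz_adj⟩, hzX⟩ := hz_mem
      have hzu : z ≠ u := hz_adj.ne'
      set G' := G.deleteEdges {s(u, z)} with hG'
      have hκ' : ∀ v, κ v ≤ deg G' v := by
        intro v
        by_cases hvu : v = u
        · subst hvu; rw [hG', deg_delete_left G hz_adj]; omega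
        · by_cases hvz : v = z
          · rw [hvz, hG', deg_delete_right G hz_adj]
            have : κ z ≠ deg G z := by
              rw [XX, Finset.mem_filter] at hzX
              intro h; exact hzX ⟨Finset.mem_univ _, h⟩
            have := hκ z
            omega
          · rw [hG', deg_delete_ne G v hvu hvz]; exact hκ v
      have hm' : mG G' ≤ n := by
        have := mG_delete_lt G hz_adj
        rw [← hG'] at this
        omega
      have hadj' : G'.Adj u w := by
        rw [hG', SimpleGraph.deleteEdges_adj]
        refine ⟨hw, ?_⟩
        rw [Set.mem_singleton_iff, Sym2.eq_iff]
        rintro (⟨-, h⟩ | ⟨h, -⟩)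
        · exact hzw h.symm
        · exact hzu h.symm
      have hdelne : ∀ t, G.Adj u t → t ∈ XX G κ → (G'.Adj u t ∧ t ∈ XX G' κ) := by
        intro t hadj htX
        have htz : t ≠ z := fun h => hzX (h ▸ htX)
        have htu : t ≠ u := hadj.ne'
        constructor
        · rw [hG', SimpleGraph.deleteEdges_adj]
          refine ⟨hadj, ?_⟩
          rw [Set.mem_singleton_iff, Sym2.eq_iff]
          rintro (⟨-, h⟩ | ⟨h, -⟩)
          · exact htz h
          · exact hzu h.symm
        · rw [XX, Finset.mem_filter] at htX ⊢
          refine ⟨Finset.mem_univ _, ?_⟩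
          rw [hG', deg_delete_ne G t htu htz]
          exact htX.2
      have hsub : nbrW G' u (XX G' κ) ⊆ nbrW G u (XX G κ) := by
        intro t ht
        simp only [nbrW, Finset.mem_filter] at ht ⊢
        obtain ⟨-, hadj't, htX'⟩ := ht
        have hadjt : G.Adj u t := by
          rw [hG', SimpleGraph.deleteEdges_adj] at hadj't
          exact hadj't.1
        have htz : t ≠ z := by
          intro h
          subst h
          rw [hG', SimpleGraph.deleteEdges_adj] at hadj't
          exact hadj't.2 rfl
        have htu : t ≠ u := hadjt.ne'
        refine ⟨Finset.mem_univ _, hadjt, ?_⟩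
        rw [XX, Finset.mem_filter] at htX' ⊢
        refine ⟨Finset.mem_univ _, ?_⟩
        rw [hG', deg_delete_ne G t htu htz] at htX'
        exact htX'.2
      have hcard' : (nbrW G' u (XX G' κ)).card < κ u :=
        lt_of_le_of_lt (Finset.card_le_card hsub) hcard
      obtain ⟨D, P, H, hnash, huD, hwP, hsub'⟩ := ih G' κ hm' hκ' u w hcard' hadj'
      refine ⟨D, P, H, nash_mono (by rw [hG']; exact SimpleGraph.deleteEdges_le _) hκ' hκ hnash,
        huD, hwP, ?_⟩
      intro t ht
      rw [nbrW, Finset.mem_filter] at ht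
      obtain ⟨-, hadjt, htX⟩ := ht
      obtain ⟨h1, h2⟩ := hdelne t hadjt htX
      apply hsub'
      simp only [nbrW, Finset.mem_filter]
      exact ⟨Finset.mem_univ _, h1, h2⟩

/-- If `|N_G(u) ∩ X| < κ u` and `w ∈ N_G(u) \ X` then there is a DP-Nash
subgraph with `u ∈ D` and `{w} ∪ (N_G(u) ∩ X) ⊆ P`. -/
theorem stmt3 (G : SimpleGraph V) (κ : V → ℕ) (hκ : ∀ v, κ v ≤ deg G v)
    (u w : V) (hu : (nbrW G u (XX G κ)).card < κ u)
    (hw : G.Adj u w) (hwX : w ∉ XX G κ) :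
    ∃ (D P : Finset V) (H : SimpleGraph V),
      IsDPNash G κ D P H ∧ u ∈ D ∧ w ∈ P ∧ nbrW G u (XX G κ) ⊆ P := by
  exact lemma2 (mG G) G κ le_rfl hκ u w hu hw
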